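/- Let m ≥ 1 and let X < 2^(2m) be a natural number, with high half X_H = X / 2^m and low half X_L = X % 2^m. Then LOC_{2m}(X) = m + LOC_m(X_L) if X_H = 2^m - 1, and LOC_{2m}(X) = LOC_m(X_H) otherwise. -/

import Mathlib

/-- The `m`-bit leading-one count: `m` if `X = 2^m - 1`, otherwise the least `γ`
such that `X.testBit (m - 1 - γ) = false`. -/
noncomputable def LOC (m X : ℕ) : ℕ :=
  if X = 2 ^ m - 1 then m else sInf {γ : ℕ | X.testBit (m - 1 - γ) = false}

private lemma loc_sInf_eq {S : Set ℕ} {k : ℕ} (hk : k ∈ S) (h : ∀ j < k, j ∉ S) :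
    sInf S = k :=
  le_antisymm (Nat.sInf_le hk)
    (le_of_not_gt fun hlt => h _ hlt (Nat.sInf_mem ⟨k, hk⟩))

private lemma loc_all_ones {m X : ℕ} (hX : X < 2 ^ m)
    (h : ∀ i < m, X.testBit i = true) : X = 2 ^ m - 1 := by
  apply Nat.eq_of_testBit_eq
  intro j
  rw [Nat.testBit_two_pow_sub_one]
  by_cases hj : j < m
  · simp [h j hj, hj]
  · have : X < 2 ^ j :=
      lt_of_lt_of_le hX (Nat.pow_le_pow_right (by norm_num) (le_of_not_gt hj))
    simp [hj, Nat.testBit_eq_false_of_lt this]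

private lemma loc_testBit_div {X m i : ℕ} : (X / 2 ^ m).testBit i = X.testBit (m + i) := by
  rw [← Nat.shiftRight_eq_div_pow, Nat.testBit_shiftRight]

theorem stmt_10 (m X : ℕ) (hm : 1 ≤ m) (hX : X < 2 ^ (2 * m)) :
    LOC (2 * m) X =
      if X / 2 ^ m = 2 ^ m - 1 then m + LOC m (X % 2 ^ m) else LOC m (X / 2 ^ m) := by
  have hp : 0 < 2 ^ m := Nat.pow_pos (by norm_num)
  have hpm : 2 ^ (2 * m) = 2 ^ m * 2 ^ m := by rw [two_mul, pow_add]
  have hHlt : X / 2 ^ m < 2 ^ m := Nat.div_lt_of_lt_mul (by rwa [hpm] at hX)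
  have hLlt : X % 2 ^ m < 2 ^ m := Nat.mod_lt _ hp
  have hdm : 2 ^ m * (X / 2 ^ m) + X % 2 ^ m = X := Nat.div_add_mod X (2 ^ m)
  have hbit_lo : ∀ i, i < m → X.testBit i = (X % 2 ^ m).testBit i := by
    intro i hi
    rw [Nat.testBit_mod_two_pow]
    simp [hi]
  have hbit_hi : ∀ i, X.testBit (m + i) = (X / 2 ^ m).testBit i := by
    intro i; rw [loc_testBit_div]
  -- X is all ones iff both halves are all ones
  have hsplit : X = 2 ^ (2 * m) - 1 ↔
      (X / 2 ^ m = 2 ^ m - 1 ∧ X % 2 ^ m = 2 ^ m - 1) := by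
    constructor
    · intro hXe
      have h1 : 2 ^ m * (2 ^ m - 1) + (2 ^ m - 1) = 2 ^ (2 * m) - 1 := by
        have hmul : 2 ^ m * (2 ^ m - 1) = 2 ^ m * 2 ^ m - 2 ^ m := by
          rw [Nat.mul_sub, mul_one]
        have hle : 2 ^ m ≤ 2 ^ m * 2 ^ m := Nat.le_mul_of_pos_right _ hp
        omega
      constructor
      · rw [hXe, ← h1, Nat.mul_add_div hp, Nat.div_eq_of_lt (by omega), add_zero]
      · rw [hXe, ← h1, Nat.mul_add_mod, Nat.mod_eq_of_lt (by omega)]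
    · rintro ⟨h1, h2⟩
      rw [← hdm, h1, h2, hpm]
      have hmul : 2 ^ m * (2 ^ m - 1) = 2 ^ m * 2 ^ m - 2 ^ m := by
        rw [Nat.mul_sub, mul_one]
      have : 2 ^ m ≤ 2 ^ m * 2 ^ m := Nat.le_mul_of_pos_right _ hp
      omega
  by_cases hHe : X / 2 ^ m = 2 ^ m - 1
  · rw [if_pos hHe]
    by_cases hLe : X % 2 ^ m = 2 ^ m - 1
    · have hXe : X = 2 ^ (2 * m) - 1 := hsplit.2 ⟨hHe, hLe⟩
      rw [LOC, LOC, if_pos hXe, if_pos hLe, two_mul]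
    · have hXne : X ≠ 2 ^ (2 * m) - 1 := fun h => hLe (hsplit.1 h).2
      rw [LOC, LOC, if_neg hXne, if_neg hLe]
      -- inner set is nonempty
      have hTne : {δ : ℕ | (X % 2 ^ m).testBit (m - 1 - δ) = false}.Nonempty := by
        by_contra hemp
        apply hLe
        apply loc_all_ones hLlt
        intro i hi
        have h1 : (m - 1 - (m - 1 - i)) = i := by omega
        by_contra hf
        exact hemp ⟨m - 1 - i, by
          simp only [Set.mem_setOf_eq, h1]
          simp only [Bool.not_eq_true] at hf
          exact hf⟩
      set δ := sInf {δ : ℕ | (X % 2 ^ m).testBit (m - 1 - δ) = false} with hδ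
      have hmemδ : (X % 2 ^ m).testBit (m - 1 - δ) = false := Nat.sInf_mem hTne
      apply loc_sInf_eq
      · show X.testBit (2 * m - 1 - (m + δ)) = false
        have h1 : 2 * m - 1 - (m + δ) = m - 1 - δ := by omega
        rw [h1, hbit_lo _ (by omega)]
        exact hmemδ
      · intro j hj
        simp only [Set.mem_setOf_eq]
        by_cases hjm : j < m
        · have h1 : 2 * m - 1 - j = m + (m - 1 - j) := by omega
          rw [h1, hbit_hi, hHe, Nat.testBit_two_pow_sub_one]
          simp; omega
        · have h1 : 2 * m - 1 - j = m - 1 - (j - m) := by omega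
          rw [h1, hbit_lo _ (by omega)]
          have : j - m ∉ {δ : ℕ | (X % 2 ^ m).testBit (m - 1 - δ) = false} :=
            Nat.notMem_of_lt_sInf (by omega)
          simpa using this
  · rw [if_neg hHe]
    have hXne : X ≠ 2 ^ (2 * m) - 1 := fun h => hHe (hsplit.1 h).1
    rw [LOC, LOC, if_neg hXne, if_neg hHe]
    have hTne : {δ : ℕ | (X / 2 ^ m).testBit (m - 1 - δ) = false}.Nonempty := by
      by_contra hemp
      apply hHe
      apply loc_all_ones hHlt
      intro i hi
      have h1 : (m - 1 - (m - 1 - i)) = i := by omega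
      by_contra hf
      exact hemp ⟨m - 1 - i, by
        simp only [Set.mem_setOf_eq, h1]
        simp only [Bool.not_eq_true] at hf
        exact hf⟩
    set δ := sInf {δ : ℕ | (X / 2 ^ m).testBit (m - 1 - δ) = false} with hδ
    have hmemδ : (X / 2 ^ m).testBit (m - 1 - δ) = false := Nat.sInf_mem hTne
    have hδle : δ ≤ m - 1 := by
      obtain ⟨d, hd⟩ := hTne
      by_cases hdm' : d ≤ m - 1
      · exact le_trans (Nat.sInf_le hd) hdm'
      · refine Nat.sInf_le ?_
        simp only [Set.mem_setOf_eq] at hd ⊢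
        have : m - 1 - (m - 1) = m - 1 - d := by omega
        rw [this]; exact hd
    symm
    symm
    apply loc_sInf_eq
    · show X.testBit (2 * m - 1 - δ) = false
      have h1 : 2 * m - 1 - δ = m + (m - 1 - δ) := by omega
      rw [h1, hbit_hi]
      exact hmemδ
    · intro j hj
      simp only [Set.mem_setOf_eq]
      have h1 : 2 * m - 1 - j = m + (m - 1 - j) := by omega
      rw [h1, hbit_hi]
      have : j ∉ {δ : ℕ | (X / 2 ^ m).testBit (m - 1 - δ) = false} :=
        Nat.notMem_of_lt_sInf hj
      simpa using this
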